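/- Measuring the witness W = (Π − ε·1)/(4 − 8ε) built from the three-qubit Shifts UPB along the local bases {|0⟩,|1⟩} and {|e⟩,|ē⟩} yields a GYNI score (sum of the four GYNI probability terms) equal to (1−ε)/(1−2ε) > 1, exceeding the quantum bound of 1. -/

import Mathlib

open Matrix

/-- The three-qubit Hilbert space `ℂ² ⊗ ℂ² ⊗ ℂ²`. -/
abbrev Q3 := Fin 2 × Fin 2 × Fin 2

/-- Product vector `α ⊗ β ⊗ γ` of three qubit vectors. -/
def vt (α β γ : Fin 2 → ℂ) : Q3 → ℂ := fun p => α p.1 * β p.2.1 * γ p.2.2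

/-- A unit vector. -/
def unitVec (v : Fin 2 → ℂ) : Prop := star v ⬝ᵥ v = 1

/-- Rank-one projector `|ψ⟩⟨ψ|` on three qubits. -/
def outer (ψ : Q3 → ℂ) : Matrix Q3 Q3 ℂ := Matrix.of fun u w => ψ u * star (ψ w)

/-- Rank-one projector `|v⟩⟨v|` on one qubit. -/
def proj1 (v : Fin 2 → ℂ) : Matrix (Fin 2) (Fin 2) ℂ :=
  Matrix.of fun i j => v i * star (v j)

/-- Tensor product of three one-qubit matrices. -/
def tens3 (A B C : Matrix (Fin 2) (Fin 2) ℂ) : Matrix Q3 Q3 ℂ :=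
  Matrix.of fun u w => A u.1 w.1 * B u.2.1 w.2.1 * C u.2.2 w.2.2

def ket0 : Fin 2 → ℂ := ![1, 0]
def ket1 : Fin 2 → ℂ := ![0, 1]

/-- Local two-outcome projective measurement: for input `false` measure in the
computational basis `{|0⟩,|1⟩}`, for input `true` in the basis `{|e⟩,|ē⟩}`;
the outcome selects the corresponding basis projector. -/
def meas (e eb : Fin 2 → ℂ) : Bool → Bool → Matrix (Fin 2) (Fin 2) ℂ
  | false, false => proj1 ket0
  | false, true => proj1 ket1
  | true, false => proj1 e
  | true, true => proj1 eb

namespace ShiftsAux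

open ComplexConjugate

lemma tens3_proj (a b c : Fin 2 → ℂ) :
    tens3 (proj1 a) (proj1 b) (proj1 c) = outer (vt a b c) := by
  ext ⟨i, j, k⟩ ⟨i', j', k'⟩
  simp [tens3, proj1, outer, vt]
  ring

lemma ip_vt (a b c a' b' c' : Fin 2 → ℂ) :
    star (vt a b c) ⬝ᵥ vt a' b' c'
      = (star a ⬝ᵥ a') * (star b ⬝ᵥ b') * (star c ⬝ᵥ c') := by
  simp [dotProduct, vt, Fintype.sum_prod_type, Fin.sum_univ_two]
  ring

lemma trace_mul_outer (M : Matrix Q3 Q3 ℂ) (ψ : Q3 → ℂ) :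
    (M * outer ψ).trace = star ψ ⬝ᵥ M.mulVec ψ := by
  simp [Matrix.trace, Matrix.mul_apply, outer, Matrix.diag, dotProduct, Matrix.mulVec,
    Fintype.sum_prod_type, Fin.sum_univ_two]
  ring

lemma quad_outer (ψ v : Q3 → ℂ) :
    star v ⬝ᵥ (outer ψ).mulVec v = (star v ⬝ᵥ ψ) * (star ψ ⬝ᵥ v) := by
  simp [outer, dotProduct, Matrix.mulVec, Fintype.sum_prod_type, Fin.sum_univ_two]
  ring

lemma dot_conj (u v : Fin 2 → ℂ) : star u ⬝ᵥ v = conj (star v ⬝ᵥ u) := by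
  simp [dotProduct, Fin.sum_univ_two]
  ring

lemma dot_conj3 (u v : Q3 → ℂ) : star u ⬝ᵥ v = conj (star v ⬝ᵥ u) := by
  simp [dotProduct]
  exact Finset.sum_congr rfl fun x _ => by ring

section pairs
variable (e eb : Fin 2 → ℂ) (he : unitVec e) (heb : unitVec eb)
  (horth : star e ⬝ᵥ eb = 0) (hne0 : e 0 ≠ 0) (hne1 : e 1 ≠ 0)

include he heb horth in
lemma eeb_complete (v : Fin 2 → ℂ) (h1 : star e ⬝ᵥ v = 0) (h2 : star eb ⬝ᵥ v = 0) :
    v = 0 := by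
  set U : Matrix (Fin 2) (Fin 2) ℂ := Matrix.of fun i j => if j = 0 then e i else eb i with hU
  have hUU : Uᴴ * U = 1 := by
    ext i j
    fin_cases i <;> fin_cases j <;>
      simpa [hU, Matrix.mul_apply, Matrix.conjTranspose_apply, Fin.sum_univ_two,
        Matrix.one_apply, unitVec, dotProduct, mul_comm] using by
          first
          | simpa [unitVec, dotProduct, Fin.sum_univ_two, mul_comm] using he
          | simpa [unitVec, dotProduct, Fin.sum_univ_two, mul_comm] using heb
          | simpa [dotProduct, Fin.sum_univ_two, mul_comm] using horth
          | simpa [dotProduct, Fin.sum_univ_two, mul_comm] using congrArg conj horth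
  have hU2 : U * Uᴴ = 1 := mul_eq_one_comm.mp hUU
  have hv0 : Uᴴ.mulVec v = 0 := by
    ext i
    fin_cases i <;>
      simpa [hU, Matrix.mulVec, Matrix.conjTranspose_apply, dotProduct,
        Fin.sum_univ_two] using by
          first
          | simpa [dotProduct, Fin.sum_univ_two] using h1
          | simpa [dotProduct, Fin.sum_univ_two] using h2
  have : (U * Uᴴ).mulVec v = U.mulVec (Uᴴ.mulVec v) := by
    rw [Matrix.mulVec_mulVec]
  rw [hU2, hv0, Matrix.one_mulVec, Matrix.mulVec_zero] at this
  exact this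

include heb horth hne0 hne1 in
lemma eb_ne : eb 0 ≠ 0 ∧ eb 1 ≠ 0 := by
  have ho : conj (e 0) * eb 0 + conj (e 1) * eb 1 = 0 := by
    simpa [dotProduct, Fin.sum_univ_two] using horth
  have hb : conj (eb 0) * eb 0 + conj (eb 1) * eb 1 = 1 := by
    simpa [unitVec, dotProduct, Fin.sum_univ_two] using heb
  constructor
  · intro h0
    rw [h0] at ho
    have hm : conj (e 1) * eb 1 = 0 := by simpa using ho
    have h1 : eb 1 = 0 := by
      rcases mul_eq_zero.mp hm with h | h
      · exact absurd (by simpa using congrArg conj h) hne1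
      · exact h
    rw [h0, h1] at hb; simp at hb
  · intro h1
    rw [h1] at ho
    have hm : conj (e 0) * eb 0 = 0 := by simpa using ho
    have h0 : eb 0 = 0 := by
      rcases mul_eq_zero.mp hm with h | h
      · exact absurd (by simpa using congrArg conj h) hne0
      · exact h
    rw [h0, h1] at hb; simp at hb

include he heb horth hne0 hne1 in
lemma pairs (v : Fin 2 → ℂ) (hv : unitVec v) :
    ¬(v 0 = 0 ∧ v 1 = 0) ∧ ¬(v 0 = 0 ∧ star e ⬝ᵥ v = 0) ∧ ¬(v 0 = 0 ∧ star eb ⬝ᵥ v = 0)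
    ∧ ¬(v 1 = 0 ∧ star e ⬝ᵥ v = 0) ∧ ¬(v 1 = 0 ∧ star eb ⬝ᵥ v = 0)
    ∧ ¬(star e ⬝ᵥ v = 0 ∧ star eb ⬝ᵥ v = 0) := by
  obtain ⟨hb0, hb1⟩ := eb_ne e eb heb horth hne0 hne1
  have hvu : conj (v 0) * v 0 + conj (v 1) * v 1 = 1 := by
    simpa [unitVec, dotProduct, Fin.sum_univ_two] using hv
  have hnb : ¬(v 0 = 0 ∧ v 1 = 0) := by
    rintro ⟨h0, h1⟩; rw [h0, h1] at hvu; simp at hvu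
  refine ⟨hnb, ?_, ?_, ?_, ?_, ?_⟩
  · rintro ⟨h0, h⟩
    simp [dotProduct, Fin.sum_univ_two, h0] at h
    rcases h with h | h
    · exact hne1 (by simpa using congrArg conj h)
    · exact hnb ⟨h0, h⟩
  · rintro ⟨h0, h⟩
    simp [dotProduct, Fin.sum_univ_two, h0] at h
    rcases h with h | h
    · exact hb1 (by simpa using congrArg conj h)
    · exact hnb ⟨h0, h⟩
  · rintro ⟨h1, h⟩
    simp [dotProduct, Fin.sum_univ_two, h1] at h
    rcases h with h | h
    · exact hne0 (by simpa using congrArg conj h)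
    · exact hnb ⟨h, h1⟩
  · rintro ⟨h1, h⟩
    simp [dotProduct, Fin.sum_univ_two, h1] at h
    rcases h with h | h
    · exact hb0 (by simpa using congrArg conj h)
    · exact hnb ⟨h, h1⟩
  · rintro ⟨h1, h2⟩
    have := eeb_complete e eb he heb horth v h1 h2
    rw [this] at hvu; simp at hvu
end pairs

lemma quad_sum4 (ψ1 ψ2 ψ3 ψ4 v : Q3 → ℂ) :
    star v ⬝ᵥ (outer ψ1 + outer ψ2 + outer ψ3 + outer ψ4).mulVec v
    = ((Complex.normSq (star ψ1 ⬝ᵥ v) + Complex.normSq (star ψ2 ⬝ᵥ v)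
       + Complex.normSq (star ψ3 ⬝ᵥ v) + Complex.normSq (star ψ4 ⬝ᵥ v) : ℝ) : ℂ) := by
  rw [Matrix.add_mulVec, Matrix.add_mulVec, Matrix.add_mulVec,
    dotProduct_add, dotProduct_add, dotProduct_add,
    quad_outer, quad_outer, quad_outer, quad_outer,
    dot_conj3 v ψ1, dot_conj3 v ψ2, dot_conj3 v ψ3, dot_conj3 v ψ4]
  push_cast [Complex.normSq_eq_conj_mul_self]
  ring

end ShiftsAux

set_option maxHeartbeats 1000000 in
open ShiftsAux ComplexConjugate in
/-- Measuring the witness `W = (Π − ε·𝟙)/(4 − 8ε)` built from the three-qubit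
Shifts UPB along the local bases `{|0⟩,|1⟩}` and `{|e⟩,|ē⟩}` yields a GYNI
score `P(000|000)+P(110|011)+P(011|101)+P(101|110) = (1−ε)/(1−2ε) > 1`,
exceeding the quantum bound of `1`. -/
theorem shifts_upb_witness_gyni_score (e eb : Fin 2 → ℂ)
    (he : unitVec e) (heb : unitVec eb) (horth : star e ⬝ᵥ eb = 0)
    (hne0 : e 0 ≠ 0) (hne1 : e 1 ≠ 0)
    (Pr : Matrix Q3 Q3 ℂ)
    (hPr : Pr = outer (vt ket0 ket0 ket0) + outer (vt ket1 eb e)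
        + outer (vt e ket1 eb) + outer (vt eb e ket1))
    (ε : ℝ)
    (hε : IsLeast {r : ℝ | ∃ α β γ : Fin 2 → ℂ, unitVec α ∧ unitVec β ∧ unitVec γ ∧
      (r : ℂ) = star (vt α β γ) ⬝ᵥ Pr.mulVec (vt α β γ)} ε)
    (W : Matrix Q3 Q3 ℂ)
    (hW : W = ((4 - 8 * ε : ℝ) : ℂ)⁻¹ • (Pr - (ε : ℝ) • (1 : Matrix Q3 Q3 ℂ)))
    -- the GYNI probabilities `P(a|x) = tr(W M^{a₁}_{x₁} ⊗ M^{a₂}_{x₂} ⊗ M^{a₃}_{x₃})`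
    (P : (Bool × Bool × Bool) → (Bool × Bool × Bool) → ℝ)
    (hP : ∀ x a : Bool × Bool × Bool,
      P x a = ((W * tens3 (meas e eb x.1 a.1) (meas e eb x.2.1 a.2.1)
        (meas e eb x.2.2 a.2.2)).trace).re) :
    P (false, false, false) (false, false, false)
      + P (false, true, true) (true, true, false)
      + P (true, false, true) (false, true, true)
      + P (true, true, false) (true, false, true) = (1 - ε) / (1 - 2 * ε) ∧
    1 < (1 - ε) / (1 - 2 * ε) := by
  classical
  -- basic one-qubit inner products
  have dk0 : ∀ v : Fin 2 → ℂ, star ket0 ⬝ᵥ v = v 0 := by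
    intro v; simp [ket0, dotProduct, Fin.sum_univ_two]
  have dk1 : ∀ v : Fin 2 → ℂ, star ket1 ⬝ᵥ v = v 1 := by
    intro v; simp [ket1, dotProduct, Fin.sum_univ_two]
  have dv0 : ∀ v : Fin 2 → ℂ, star v ⬝ᵥ ket0 = conj (v 0) := by
    intro v; simp [ket0, dotProduct, Fin.sum_univ_two]
  have dv1 : ∀ v : Fin 2 → ℂ, star v ⬝ᵥ ket1 = conj (v 1) := by
    intro v; simp [ket1, dotProduct, Fin.sum_univ_two]
  have h00 : ket0 0 = 1 := by norm_num [ket0]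
  have h01 : ket0 1 = 0 := by norm_num [ket0]
  have h10 : ket1 0 = 0 := by norm_num [ket1]
  have h11 : ket1 1 = 1 := by norm_num [ket1]
  have u0 : unitVec ket0 := by simp [unitVec, ket0, dotProduct, Fin.sum_univ_two]
  have u1 : unitVec ket1 := by simp [unitVec, ket1, dotProduct, Fin.sum_univ_two]
  have hbe : star eb ⬝ᵥ e = 0 := by rw [dot_conj, horth]; simp
  have k01 : star ket0 ⬝ᵥ ket1 = 0 := by simp [dk0, ket1]
  have k10 : star ket1 ⬝ᵥ ket0 = 0 := by simp [dk1, ket0]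
  -- the quadratic form of Pr
  have hquad : ∀ v : Q3 → ℂ, star v ⬝ᵥ Pr.mulVec v
      = ((Complex.normSq (star (vt ket0 ket0 ket0) ⬝ᵥ v)
        + Complex.normSq (star (vt ket1 eb e) ⬝ᵥ v)
        + Complex.normSq (star (vt e ket1 eb) ⬝ᵥ v)
        + Complex.normSq (star (vt eb e ket1) ⬝ᵥ v) : ℝ) : ℂ) := by
    intro v; rw [hPr]; exact quad_sum4 _ _ _ _ v
  -- ε ≥ 0 and ε ≠ 0 (UPB property)
  obtain ⟨⟨α, β, γ, hα, hβ, hγ, hval⟩, hlb⟩ := hε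
  rw [hquad] at hval
  have hval' : ε = Complex.normSq (star (vt ket0 ket0 ket0) ⬝ᵥ vt α β γ)
      + Complex.normSq (star (vt ket1 eb e) ⬝ᵥ vt α β γ)
      + Complex.normSq (star (vt e ket1 eb) ⬝ᵥ vt α β γ)
      + Complex.normSq (star (vt eb e ket1) ⬝ᵥ vt α β γ) := by
    exact_mod_cast hval
  have hε0 : 0 ≤ ε := by
    rw [hval']
    have n1 := Complex.normSq_nonneg (star (vt ket0 ket0 ket0) ⬝ᵥ vt α β γ)
    have n2 := Complex.normSq_nonneg (star (vt ket1 eb e) ⬝ᵥ vt α β γ)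
    have n3 := Complex.normSq_nonneg (star (vt e ket1 eb) ⬝ᵥ vt α β γ)
    have n4 := Complex.normSq_nonneg (star (vt eb e ket1) ⬝ᵥ vt α β γ)
    linarith
  have hεne : ε ≠ 0 := by
    intro h0
    rw [h0] at hval'
    have hz1 : star (vt ket0 ket0 ket0) ⬝ᵥ vt α β γ = 0 := by
      have := Complex.normSq_eq_zero.mp (by nlinarith [Complex.normSq_nonneg (star (vt ket0 ket0 ket0) ⬝ᵥ vt α β γ), Complex.normSq_nonneg (star (vt ket1 eb e) ⬝ᵥ vt α β γ), Complex.normSq_nonneg (star (vt e ket1 eb) ⬝ᵥ vt α β γ), Complex.normSq_nonneg (star (vt eb e ket1) ⬝ᵥ vt α β γ)] : Complex.normSq (star (vt ket0 ket0 ket0) ⬝ᵥ vt α β γ) = 0)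
      exact this
    have hz2 : star (vt ket1 eb e) ⬝ᵥ vt α β γ = 0 := by
      have := Complex.normSq_eq_zero.mp (by nlinarith [Complex.normSq_nonneg (star (vt ket0 ket0 ket0) ⬝ᵥ vt α β γ), Complex.normSq_nonneg (star (vt ket1 eb e) ⬝ᵥ vt α β γ), Complex.normSq_nonneg (star (vt e ket1 eb) ⬝ᵥ vt α β γ), Complex.normSq_nonneg (star (vt eb e ket1) ⬝ᵥ vt α β γ)] : Complex.normSq (star (vt ket1 eb e) ⬝ᵥ vt α β γ) = 0)
      exact this
    have hz3 : star (vt e ket1 eb) ⬝ᵥ vt α β γ = 0 := by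
      have := Complex.normSq_eq_zero.mp (by nlinarith [Complex.normSq_nonneg (star (vt ket0 ket0 ket0) ⬝ᵥ vt α β γ), Complex.normSq_nonneg (star (vt ket1 eb e) ⬝ᵥ vt α β γ), Complex.normSq_nonneg (star (vt e ket1 eb) ⬝ᵥ vt α β γ), Complex.normSq_nonneg (star (vt eb e ket1) ⬝ᵥ vt α β γ)] : Complex.normSq (star (vt e ket1 eb) ⬝ᵥ vt α β γ) = 0)
      exact this
    have hz4 : star (vt eb e ket1) ⬝ᵥ vt α β γ = 0 := by
      have := Complex.normSq_eq_zero.mp (by nlinarith [Complex.normSq_nonneg (star (vt ket0 ket0 ket0) ⬝ᵥ vt α β γ), Complex.normSq_nonneg (star (vt ket1 eb e) ⬝ᵥ vt α β γ), Complex.normSq_nonneg (star (vt e ket1 eb) ⬝ᵥ vt α β γ), Complex.normSq_nonneg (star (vt eb e ket1) ⬝ᵥ vt α β γ)] : Complex.normSq (star (vt eb e ket1) ⬝ᵥ vt α β γ) = 0)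
      exact this
    rw [ip_vt, dk0, dk0, dk0] at hz1
    rw [ip_vt, dk1] at hz2
    rw [ip_vt, dk1] at hz3
    rw [ip_vt, dk1] at hz4
    have d1 : α 0 = 0 ∨ β 0 = 0 ∨ γ 0 = 0 := by
      simpa [mul_eq_zero, or_assoc] using hz1
    have d2 : α 1 = 0 ∨ star eb ⬝ᵥ β = 0 ∨ star e ⬝ᵥ γ = 0 := by
      simpa [mul_eq_zero, or_assoc] using hz2
    have d3 : star e ⬝ᵥ α = 0 ∨ β 1 = 0 ∨ star eb ⬝ᵥ γ = 0 := by
      simpa [mul_eq_zero, or_assoc] using hz3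
    have d4 : star eb ⬝ᵥ α = 0 ∨ star e ⬝ᵥ β = 0 ∨ γ 1 = 0 := by
      simpa [mul_eq_zero, or_assoc] using hz4
    obtain ⟨pa1, pa2, pa3, pa4, pa5, pa6⟩ := pairs e eb he heb horth hne0 hne1 α hα
    obtain ⟨pb1, pb2, pb3, pb4, pb5, pb6⟩ := pairs e eb he heb horth hne0 hne1 β hβ
    obtain ⟨pc1, pc2, pc3, pc4, pc5, pc6⟩ := pairs e eb he heb horth hne0 hne1 γ hγ
    clear hval' hlb hquad hP hW hPr
    rcases d1 with h1 | h1 | h1 <;> rcases d2 with h2 | h2 | h2 <;>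
      rcases d3 with h3 | h3 | h3 <;> rcases d4 with h4 | h4 | h4 <;>
      first
      | exact pa1 ⟨h1, h2⟩
      | exact pa2 ⟨h1, h3⟩
      | exact pa3 ⟨h1, h4⟩
      | exact pa4 ⟨h2, h3⟩
      | exact pa5 ⟨h2, h4⟩
      | exact pa6 ⟨h3, h4⟩
      | exact pb1 ⟨h1, h3⟩
      | exact pb2 ⟨h1, h4⟩
      | exact pb3 ⟨h1, h2⟩
      | exact pb4 ⟨h3, h4⟩
      | exact pb5 ⟨h3, h2⟩
      | exact pb6 ⟨h4, h2⟩
      | exact pc1 ⟨h1, h4⟩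
      | exact pc2 ⟨h1, h2⟩
      | exact pc3 ⟨h1, h3⟩
      | exact pc4 ⟨h4, h2⟩
      | exact pc5 ⟨h4, h3⟩
      | exact pc6 ⟨h2, h3⟩
  -- ε ≤ 1/4
  have hub : ε ≤ Complex.normSq (eb 0) * Complex.normSq (e 0) := by
    apply hlb
    refine ⟨ket0, ket0, ket1, u0, u0, u1, ?_⟩
    rw [hquad, ip_vt, ip_vt, ip_vt, ip_vt]
    simp only [dk0, dk1, dv0, dv1, h00, h01, h10, h11]
    simp [Complex.normSq_mul, Complex.normSq_conj, mul_comm]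
  have hq14 : Complex.normSq (eb 0) * Complex.normSq (e 0) ≤ 1 / 4 := by
    have hea : Complex.normSq (e 0) + Complex.normSq (e 1) = 1 := by
      have : ((Complex.normSq (e 0) + Complex.normSq (e 1) : ℝ) : ℂ) = 1 := by
        push_cast [Complex.normSq_eq_conj_mul_self]
        simpa [unitVec, dotProduct, Fin.sum_univ_two] using he
      exact_mod_cast this
    have heba : Complex.normSq (eb 0) + Complex.normSq (eb 1) = 1 := by
      have : ((Complex.normSq (eb 0) + Complex.normSq (eb 1) : ℝ) : ℂ) = 1 := by
        push_cast [Complex.normSq_eq_conj_mul_self]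
        simpa [unitVec, dotProduct, Fin.sum_univ_two] using heb
      exact_mod_cast this
    have ho : conj (e 0) * eb 0 = -(conj (e 1) * eb 1) := by
      have := horth
      simp [dotProduct, Fin.sum_univ_two] at this
      linear_combination this
    have hns : Complex.normSq (e 0) * Complex.normSq (eb 0)
        = Complex.normSq (e 1) * Complex.normSq (eb 1) := by
      have := congrArg Complex.normSq ho
      simpa [Complex.normSq_mul] using this
    have hb1 : Complex.normSq (e 1) = 1 - Complex.normSq (e 0) := by linarith
    have hy1 : Complex.normSq (eb 1) = 1 - Complex.normSq (eb 0) := by linarith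
    rw [hb1, hy1] at hns
    have hx : Complex.normSq (eb 0) = 1 - Complex.normSq (e 0) := by
      ring_nf at hns; linarith
    rw [hx]
    nlinarith [sq_nonneg (Complex.normSq (e 0) - 1/2)]
  have hε14 : ε ≤ 1 / 4 := le_trans hub hq14
  have hεpos : 0 < ε := lt_of_le_of_ne hε0 (Ne.symm hεne)
  have hden : (1 : ℝ) - 2 * ε > 0 := by linarith
  have hden4 : (4 : ℝ) - 8 * ε ≠ 0 := by intro h; linarith
  -- value of the witness on each UPB vector
  have hquadW : ∀ ψ1 ψ2 ψ3 : Fin 2 → ℂ, unitVec ψ1 → unitVec ψ2 → unitVec ψ3 →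
      star (vt ψ1 ψ2 ψ3) ⬝ᵥ Pr.mulVec (vt ψ1 ψ2 ψ3) = 1 →
      ((W * outer (vt ψ1 ψ2 ψ3)).trace).re = (4 - 8 * ε)⁻¹ * (1 - ε) := by
    intro ψ1 ψ2 ψ3 h1 h2 h3 hq
    rw [trace_mul_outer, hW]
    rw [Matrix.smul_mulVec, dotProduct_smul, Matrix.sub_mulVec, dotProduct_sub, hq,
      Matrix.smul_mulVec, dotProduct_smul, Matrix.one_mulVec]
    have hself : star (vt ψ1 ψ2 ψ3) ⬝ᵥ vt ψ1 ψ2 ψ3 = 1 := by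
      rw [ip_vt, h1, h2, h3]; ring
    rw [hself]
    have : (((4 - 8 * ε : ℝ) : ℂ)⁻¹ • ((1 : ℂ) - (ε : ℝ) • (1 : ℂ)))
        = (((4 - 8 * ε)⁻¹ * (1 - ε) : ℝ) : ℂ) := by
      push_cast [Complex.real_smul, smul_eq_mul]
      ring
    rw [this, Complex.ofReal_re]
  -- Gram diagonal: quadratic form of Pr at each UPB vector equals 1
  have g1 : star (vt ket0 ket0 ket0) ⬝ᵥ Pr.mulVec (vt ket0 ket0 ket0) = 1 := by
    rw [hquad, ip_vt, ip_vt, ip_vt, ip_vt]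
    have hee : star e ⬝ᵥ e = (1 : ℂ) := he
    have hbb : star eb ⬝ᵥ eb = (1 : ℂ) := heb
    simp only [dk0, dk1, dv0, dv1, h00, h01, h10, h11, hee, hbb, horth, hbe]
    norm_num
  have g2 : star (vt ket1 eb e) ⬝ᵥ Pr.mulVec (vt ket1 eb e) = 1 := by
    rw [hquad, ip_vt, ip_vt, ip_vt, ip_vt]
    have hee : star e ⬝ᵥ e = (1 : ℂ) := he
    have hbb : star eb ⬝ᵥ eb = (1 : ℂ) := heb
    simp only [dk0, dk1, dv0, dv1, h00, h01, h10, h11, hee, hbb, horth, hbe]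
    norm_num
  have g3 : star (vt e ket1 eb) ⬝ᵥ Pr.mulVec (vt e ket1 eb) = 1 := by
    rw [hquad, ip_vt, ip_vt, ip_vt, ip_vt]
    have hee : star e ⬝ᵥ e = (1 : ℂ) := he
    have hbb : star eb ⬝ᵥ eb = (1 : ℂ) := heb
    simp only [dk0, dk1, dv0, dv1, h00, h01, h10, h11, hee, hbb, horth, hbe]
    norm_num
  have g4 : star (vt eb e ket1) ⬝ᵥ Pr.mulVec (vt eb e ket1) = 1 := by
    rw [hquad, ip_vt, ip_vt, ip_vt, ip_vt]
    have hee : star e ⬝ᵥ e = (1 : ℂ) := he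
    have hbb : star eb ⬝ᵥ eb = (1 : ℂ) := heb
    simp only [dk0, dk1, dv0, dv1, h00, h01, h10, h11, hee, hbb, horth, hbe]
    norm_num
  -- the four probabilities
  have p1 : P (false, false, false) (false, false, false) = (4 - 8 * ε)⁻¹ * (1 - ε) := by
    rw [hP]
    simp only [meas]
    rw [tens3_proj]
    exact hquadW ket0 ket0 ket0 u0 u0 u0 g1
  have p2 : P (false, true, true) (true, true, false) = (4 - 8 * ε)⁻¹ * (1 - ε) := by
    rw [hP]
    simp only [meas]
    rw [tens3_proj]
    exact hquadW ket1 eb e u1 heb he g2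
  have p3 : P (true, false, true) (false, true, true) = (4 - 8 * ε)⁻¹ * (1 - ε) := by
    rw [hP]
    simp only [meas]
    rw [tens3_proj]
    exact hquadW e ket1 eb he u1 heb g3
  have p4 : P (true, true, false) (true, false, true) = (4 - 8 * ε)⁻¹ * (1 - ε) := by
    rw [hP]
    simp only [meas]
    rw [tens3_proj]
    exact hquadW eb e ket1 heb he u1 g4
  constructor
  · rw [p1, p2, p3, p4]
    have h2 : (1:ℝ) - 2 * ε ≠ 0 := ne_of_gt hden
    have hmi := mul_inv_cancel₀ h2
    rw [eq_div_iff h2, show (4:ℝ) - 8 * ε = 4 * (1 - 2 * ε) by ring, mul_inv]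
    linear_combination (1 - ε) * hmi
  · rw [gt_iff_lt] at hden
    rw [lt_div_iff₀ hden]
    linarith
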